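/- Let (ℓₙ) be a sequence of pairwise disjoint, nested (k,c)-quasigeodesic lines in the hyperbolic plane that eventually leaves every compact set. Then there is a single point p of the ideal circle such that ℓₙ converges to p (i.e., for every neighborhood U of p in the compactified disk, ℓₙ ⊂ U for all large n). -/

import Mathlib

open UpperHalfPlane

/-- The Cayley transform, identifying the hyperbolic plane (upper half-plane
model) with the open unit disk in ℂ; the ideal circle is the unit circle. -/
noncomputable def cayley (z : UpperHalfPlane) : ℂ :=
  ((z : ℂ) - Complex.I) / ((z : ℂ) + Complex.I)

/-- A `(k, c)`-quasigeodesic line in the hyperbolic plane. -/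
def IsQuasigeodesicLine (k c : ℝ) (ℓ : ℝ → UpperHalfPlane) : Prop :=
  1 ≤ k ∧ 0 ≤ c ∧ ∀ s t : ℝ,
    (1 / k) * |s - t| - c ≤ dist (ℓ s) (ℓ t) ∧ dist (ℓ s) (ℓ t) ≤ k * |s - t| + c

namespace NestedQG

lemma den_ne (z : ℍ) : (z : ℂ) + Complex.I ≠ 0 := by
  intro h
  have : ((z:ℂ) + Complex.I).im = 0 := by rw [h]; simp
  simp only [Complex.add_im, Complex.I_im, coe_im] at this
  linarith [z.im_pos]

lemma abs_den (z : ℍ) : ‖(z:ℂ) + Complex.I‖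
    = 2 * Real.sqrt z.im * Real.cosh (dist z UpperHalfPlane.I / 2) := by
  have h := UpperHalfPlane.cosh_half_dist z UpperHalfPlane.I
  have hI : ((UpperHalfPlane.I : ℍ) : ℂ) = Complex.I := rfl
  rw [hI, Complex.conj_I, UpperHalfPlane.I_im, mul_one, Complex.dist_eq, sub_neg_eq_add] at h
  rw [h]
  have : Real.sqrt z.im ≠ 0 := by positivity
  field_simp

lemma abs_num (z w : ℍ) : ‖(z:ℂ) - (w:ℂ)‖
    = 2 * Real.sqrt z.im * Real.sqrt w.im * Real.sinh (dist z w / 2) := by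
  have h := UpperHalfPlane.sinh_half_dist z w
  rw [Complex.dist_eq] at h
  rw [h, Real.sqrt_mul z.im_pos.le]
  have h1 : Real.sqrt z.im ≠ 0 := by positivity
  have h2 : Real.sqrt w.im ≠ 0 := by positivity
  field_simp

lemma cayley_dist_eq (z w : ℍ) : dist (cayley z) (cayley w)
    = Real.sinh (dist z w / 2) /
      (Real.cosh (dist z UpperHalfPlane.I / 2) * Real.cosh (dist w UpperHalfPlane.I / 2)) := by
  have hz := den_ne z
  have hw := den_ne w
  have hsub : cayley z - cayley w
      = 2*Complex.I*((z:ℂ)-(w:ℂ))/((((z:ℂ))+Complex.I)*(((w:ℂ))+Complex.I)) := by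
    rw [cayley, cayley]
    field_simp
    ring
  rw [Complex.dist_eq, hsub]
  rw [norm_div, norm_mul, norm_mul, norm_mul]
  simp only [Complex.norm_two, Complex.norm_I, mul_one]
  rw [abs_num, abs_den, abs_den]
  have h1 : Real.sqrt z.im ≠ 0 := by positivity
  have h2 : Real.sqrt w.im ≠ 0 := by positivity
  have h3 : Real.cosh (dist z UpperHalfPlane.I / 2) ≠ 0 := (Real.cosh_pos _).ne'
  have h4 : Real.cosh (dist w UpperHalfPlane.I / 2) ≠ 0 := (Real.cosh_pos _).ne'
  field_simp

lemma sinh_le_exp (t : ℝ) : Real.sinh t ≤ Real.exp t / 2 := by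
  rw [Real.sinh_eq]
  have := Real.exp_pos (-t)
  linarith

lemma inv_cosh_le (x : ℝ) : 1 / Real.cosh x ≤ 2 * Real.exp (-x) := by
  rw [div_le_iff₀ (Real.cosh_pos x)]
  rw [Real.cosh_eq]
  have h1 := Real.exp_pos x
  have h2 := Real.exp_pos (-x)
  have h3 : Real.exp (-x) * Real.exp x = 1 := by
    rw [← Real.exp_add]; simp
  nlinarith

lemma cayley_dist_le (z w : ℍ) : dist (cayley z) (cayley w)
    ≤ 2 * Real.exp (dist z w / 2 - dist z UpperHalfPlane.I / 2 - dist w UpperHalfPlane.I / 2) := by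
  rw [cayley_dist_eq]
  have h3 := Real.cosh_pos (dist z UpperHalfPlane.I / 2)
  have h4 := Real.cosh_pos (dist w UpperHalfPlane.I / 2)
  have hs : Real.sinh (dist z w / 2) ≤ Real.exp (dist z w / 2) / 2 := sinh_le_exp _
  have hz' := inv_cosh_le (dist z UpperHalfPlane.I / 2)
  have hw' := inv_cosh_le (dist w UpperHalfPlane.I / 2)
  have hsnn : (0:ℝ) ≤ Real.sinh (dist z w / 2) := by
    rw [← Real.sinh_zero]; apply Real.sinh_le_sinh.mpr; positivity
  calc Real.sinh (dist z w / 2) / (Real.cosh (dist z UpperHalfPlane.I / 2) * Real.cosh (dist w UpperHalfPlane.I / 2))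
      = Real.sinh (dist z w / 2) * (1 / Real.cosh (dist z UpperHalfPlane.I / 2)) * (1 / Real.cosh (dist w UpperHalfPlane.I / 2)) := by
        field_simp
    _ ≤ (Real.exp (dist z w / 2) / 2) * (2 * Real.exp (-(dist z UpperHalfPlane.I / 2))) * (2 * Real.exp (-(dist w UpperHalfPlane.I / 2))) := by
        apply mul_le_mul
        apply mul_le_mul hs hz' (by positivity) (by positivity)
        exact hw'
        positivity
        positivity
    _ = 2 * Real.exp (dist z w / 2 - dist z UpperHalfPlane.I / 2 - dist w UpperHalfPlane.I / 2) := by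
        rw [show dist z w / 2 - dist z UpperHalfPlane.I / 2 - dist w UpperHalfPlane.I / 2 = dist z w / 2 + (-(dist z UpperHalfPlane.I / 2)) + (-(dist w UpperHalfPlane.I / 2)) by ring, Real.exp_add, Real.exp_add]; ring

lemma abs_cayley (z : ℍ) :
    ‖cayley z‖ = Real.tanh (dist z UpperHalfPlane.I / 2) := by
  have h := UpperHalfPlane.tanh_half_dist z UpperHalfPlane.I
  have hI : ((UpperHalfPlane.I : ℍ) : ℂ) = Complex.I := rfl
  rw [hI, Complex.conj_I, Complex.dist_eq, Complex.dist_eq, sub_neg_eq_add] at h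
  rw [cayley, norm_div, h]

lemma abs_cayley_lt_one (z : ℍ) : ‖cayley z‖ < 1 := by
  rw [abs_cayley, Real.tanh_eq_sinh_div_cosh, div_lt_one (Real.cosh_pos _)]
  exact Real.sinh_lt_cosh _

lemma one_sub_abs_cayley (z : ℍ) :
    1 - ‖cayley z‖ ≤ 2 * Real.exp (-dist z UpperHalfPlane.I) := by
  rw [abs_cayley, Real.tanh_eq_sinh_div_cosh]
  set x := dist z UpperHalfPlane.I / 2 with hx
  have hc := Real.cosh_pos x
  have h1 : 1 - Real.sinh x / Real.cosh x = Real.exp (-x) / Real.cosh x := by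
    field_simp
    rw [Real.cosh_sub_sinh]
  rw [h1]
  have h2 : Real.exp x / 2 ≤ Real.cosh x := by
    rw [Real.cosh_eq]; have := Real.exp_pos (-x); linarith
  have h3 : Real.exp (-x) / Real.cosh x ≤ Real.exp (-x) / (Real.exp x / 2) := by
    apply div_le_div_of_nonneg_left (Real.exp_pos _).le (by positivity) h2
  refine h3.trans ?_
  have h4 : Real.exp (-x) / (Real.exp x / 2) = 2 * Real.exp (-dist z UpperHalfPlane.I) := by
    have : -dist z UpperHalfPlane.I = -x + -x := by rw [hx]; ring
    rw [this, Real.exp_add, Real.exp_neg x]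
    field_simp
  rw [h4]

lemma geom_le' {q : ℝ} (h0 : 0 ≤ q) (h1 : q < 1) (n : ℕ) :
    ∑ i ∈ Finset.range n, q^i ≤ 1/(1-q) := by
  have hq : q ≠ 1 := h1.ne
  rw [geom_sum_eq hq]
  have h2 : (q^n - 1)/(q-1) = (1-q^n)/(1-q) := by
    rw [← neg_div_neg_eq]; ring_nf
  rw [h2, div_le_div_iff₀ (by linarith) (by linarith)]
  have : 0 ≤ q^n := by positivity
  nlinarith

lemma sum_exp_abs_le {w : ℝ} (hw : 0 < w) (N M : ℕ) :
    ∑ j ∈ Finset.range N, Real.exp (-(|(j:ℝ) - (M:ℝ)| * w)) ≤ 2 / (1 - Real.exp (-w)) := by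
  set q := Real.exp (-w) with hq
  have hq0 : 0 ≤ q := (Real.exp_pos _).le
  have hq1 : q < 1 := by rw [hq, Real.exp_lt_one_iff]; linarith
  have hterm : ∀ j : ℕ, Real.exp (-(|(j:ℝ) - (M:ℝ)| * w)) = q ^ (if j ≤ M then M - j else j - M) := by
    intro j
    rw [hq, ← Real.exp_nat_mul]
    congr 1
    rcases le_or_gt j M with h | h
    · rw [if_pos h, abs_of_nonpos (by
        simp only [sub_nonpos]; exact_mod_cast h)]
      have : ((M - j : ℕ) : ℝ) = (M:ℝ) - (j:ℝ) := by
        push_cast [h]; ring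
      rw [this]; ring
    · rw [if_neg (by omega), abs_of_pos (by
        simp only [sub_pos]; exact_mod_cast h)]
      have : ((j - M : ℕ) : ℝ) = (j:ℝ) - (M:ℝ) := by
        push_cast [h.le]; ring
      rw [this]; ring
  calc ∑ j ∈ Finset.range N, Real.exp (-(|(j:ℝ) - (M:ℝ)| * w))
      = ∑ j ∈ Finset.range N, q ^ (if j ≤ M then M - j else j - M) := by
        exact Finset.sum_congr rfl fun j _ => hterm j
    _ = (∑ j ∈ (Finset.range N).filter (fun j => j ≤ M), q ^ (M - j))
        + ∑ j ∈ (Finset.range N).filter (fun j => ¬ j ≤ M), q ^ (j - M) := by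
        rw [← Finset.sum_filter_add_sum_filter_not (Finset.range N) (fun j => j ≤ M)]
        congr 1
        · exact Finset.sum_congr rfl fun j hj => by
            rw [if_pos (Finset.mem_filter.mp hj).2]
        · exact Finset.sum_congr rfl fun j hj => by
            rw [if_neg (Finset.mem_filter.mp hj).2]
    _ ≤ (∑ i ∈ Finset.range (M+1), q ^ i) + ∑ i ∈ Finset.range N, q ^ i := by
        gcongr ?_ + ?_
        · rw [← Finset.sum_image (g := fun j => M - j)
            (by intro a ha b hb hab
                simp only [Finset.mem_coe, Finset.mem_filter, Finset.mem_range] at ha hb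
                simp only at hab
                omega)]
          apply Finset.sum_le_sum_of_subset_of_nonneg
          · intro i hi
            simp only [Finset.mem_image, Finset.mem_filter] at hi
            obtain ⟨j, ⟨_, hjM⟩, rfl⟩ := hi
            simp only [Finset.mem_range]
            omega
          · intro i _ _; positivity
        · rw [← Finset.sum_image (g := fun j => j - M)
            (by intro a ha b hb hab
                simp only [Finset.mem_coe, Finset.mem_filter, Finset.mem_range] at ha hb
                simp only at hab
                omega)]
          apply Finset.sum_le_sum_of_subset_of_nonneg
          · intro i hi
            simp only [Finset.mem_image, Finset.mem_filter] at hi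
            obtain ⟨j, ⟨hjN, hjM⟩, rfl⟩ := hi
            simp only [Finset.mem_range] at hjN ⊢
            omega
          · intro i _ _; positivity
    _ ≤ 1/(1-q) + 1/(1-q) := by
        gcongr <;> exact geom_le' hq0 hq1 _
    _ = 2/(1-q) := by ring

lemma diam_bound {k c : ℝ} (hk : 1 ≤ k) (hc : 0 ≤ c) (f : ℝ → ℍ)
    (hlow : ∀ s t : ℝ, 1/k * |s - t| - c ≤ dist (f s) (f t))
    (hup : ∀ s t : ℝ, dist (f s) (f t) ≤ k * |s - t| + c)
    {R : ℝ} (hR : ∀ u : ℝ, R ≤ dist (f u) UpperHalfPlane.I)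
    (s t : ℝ) :
    dist (cayley (f s)) (cayley (f t))
      ≤ (128 * k * Real.exp ((k+c)/2 + c/8)) * Real.exp (-R/4) := by
  have hk0 : (0:ℝ) < k := lt_of_lt_of_le one_pos hk
  wlog hst : s ≤ t with W
  · rw [dist_comm]
    exact W hk hc f hlow hup hR t s hk0 (le_of_not_ge hst)
  rcases eq_or_lt_of_le hst with rfl | hlt
  · simp only [dist_self]
    positivity
  set N : ℕ := ⌊t - s⌋₊ + 1 with hNdef
  have hN : 0 < N := Nat.succ_pos _
  have hNR : (0:ℝ) < N := by exact_mod_cast hN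
  set δ : ℝ := (t - s)/N with hδdef
  have hts : 0 < t - s := by linarith
  have hδ0 : 0 < δ := by positivity
  have hδ1 : δ ≤ 1 := by
    rw [hδdef, div_le_one hNR]
    have := Nat.lt_floor_add_one (t - s)
    push_cast [hNdef]
    push_cast at this
    linarith
  set u : ℕ → ℝ := fun j => s + j*δ with hudef
  have hu0 : u 0 = s := by simp [hudef]
  have huN : u N = t := by
    show s + (N:ℝ)*δ = t
    rw [hδdef]
    field_simp
    ring
  obtain ⟨j0, hj0mem, hj0min⟩ := Finset.exists_min_image (Finset.range (N+1))
    (fun j => dist (f (u j)) UpperHalfPlane.I) ⟨0, by simp⟩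
  set m := dist (f (u j0)) UpperHalfPlane.I with hmdef
  have hmR : R ≤ m := hR _
  set w : ℝ := δ/(8*k) with hwdef
  have hw0 : 0 < w := by positivity
  have keyj : ∀ j : ℕ, 1/k * (|(j:ℝ) - (j0:ℝ)| * δ) - c - m ≤ dist (f (u j)) UpperHalfPlane.I := by
    intro j
    have h1 := hlow (u j) (u j0)
    have h2 : dist (f (u j)) (f (u j0)) ≤ dist (f (u j)) UpperHalfPlane.I + m := by
      rw [hmdef, UpperHalfPlane.dist_comm (f (u j0)) UpperHalfPlane.I]
      exact dist_triangle _ _ _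
    have h3 : |u j - u j0| = |(j:ℝ) - (j0:ℝ)| * δ := by
      rw [show u j - u j0 = ((j:ℝ) - (j0:ℝ))*δ by simp only [hudef]; ring,
        abs_mul, abs_of_nonneg hδ0.le]
    rw [h3] at h1
    linarith
  have step : ∀ j ∈ Finset.range N,
      dist (cayley (f (u j))) (cayley (f (u (j+1))))
        ≤ (2 * Real.exp ((k+c)/2 + c/8) * Real.exp (-R/4)) * Real.exp (-(|(j:ℝ) - (j0:ℝ)| * w)) := by
    intro j hj
    refine (cayley_dist_le _ _).trans ?_
    have hdle : dist (f (u j)) (f (u (j+1))) ≤ k + c := by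
      have h1 := hup (u j) (u (j+1))
      have h2 : |u j - u (j+1)| = δ := by
        rw [show u j - u (j+1) = -δ by simp only [hudef]; push_cast; ring, abs_neg,
          abs_of_nonneg hδ0.le]
      rw [h2] at h1
      nlinarith
    have hr2 : (0:ℝ) ≤ dist (f (u (j+1))) UpperHalfPlane.I := dist_nonneg
    have hmle : m ≤ dist (f (u j)) UpperHalfPlane.I := by
      apply hj0min
      simp only [Finset.mem_range] at hj ⊢
      omega
    have hkey := keyj j
    have hexp : dist (f (u j)) (f (u (j+1))) / 2 - dist (f (u j)) UpperHalfPlane.I / 2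
          - dist (f (u (j+1))) UpperHalfPlane.I / 2
        ≤ ((k+c)/2 + c/8) + (-R/4) + (-(|(j:ℝ) - (j0:ℝ)| * w)) := by
      have hQ : |(j:ℝ) - (j0:ℝ)| * w = (1/k * (|(j:ℝ) - (j0:ℝ)| * δ))/8 := by
        rw [hwdef]; ring
      rw [hQ]
      linarith
    calc 2 * Real.exp (dist (f (u j)) (f (u (j+1))) / 2 - dist (f (u j)) UpperHalfPlane.I / 2
            - dist (f (u (j+1))) UpperHalfPlane.I / 2)
        ≤ 2 * Real.exp (((k+c)/2 + c/8) + (-R/4) + (-(|(j:ℝ) - (j0:ℝ)| * w))) := by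
          have := Real.exp_le_exp.mpr hexp
          linarith
      _ = (2 * Real.exp ((k+c)/2 + c/8) * Real.exp (-R/4)) * Real.exp (-(|(j:ℝ) - (j0:ℝ)| * w)) := by
          rw [Real.exp_add, Real.exp_add]; ring
  have hsum : ∑ j ∈ Finset.range N, Real.exp (-(|(j:ℝ) - (j0:ℝ)| * w)) ≤ 64 * k := by
    rcases eq_or_lt_of_le (Nat.one_le_iff_ne_zero.mpr hN.ne') with h1 | h2
    · rw [← h1]
      simp only [Finset.range_one, Finset.sum_singleton]
      have : Real.exp (-(|(0:ℝ) - (j0:ℝ)| * w)) ≤ 1 := by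
        rw [Real.exp_le_one_iff]
        have : (0:ℝ) ≤ |(0:ℝ) - (j0:ℝ)| * w := by positivity
        push_cast
        linarith
      push_cast at this ⊢
      nlinarith
    · have hN2 : 2 ≤ N := h2
      have hts1 : 1 ≤ t - s := by
        have : 1 ≤ ⌊t - s⌋₊ := by omega
        calc (1:ℝ) = ((1:ℕ):ℝ) := by norm_num
          _ ≤ (⌊t - s⌋₊ : ℝ) := by exact_mod_cast this
          _ ≤ t - s := Nat.floor_le hts.le
      have hδhalf : 1/2 ≤ δ := by
        rw [hδdef, le_div_iff₀ hNR]
        have hfl : (N:ℝ) ≤ (t-s) + 1 := by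
          push_cast [hNdef]
          linarith [Nat.floor_le hts.le]
        linarith
      have hwlow : 1/(16*k) ≤ w := by
        rw [hwdef]
        rw [div_le_div_iff₀ (by positivity) (by positivity)]
        nlinarith
      have hx0 : 1/(16*k) ≤ 1 := by
        rw [div_le_one (by positivity)]; nlinarith
      have hden : 1/(32*k) ≤ 1 - Real.exp (-w) := by
        have h5 : Real.exp (-(1/(16*k))) ≤ 1/(1 + 1/(16*k)) := by
          rw [Real.exp_neg, inv_eq_one_div]
          apply one_div_le_one_div_of_le (by positivity)
          linarith [Real.add_one_le_exp (1/(16*k))]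
        have h6 : Real.exp (-w) ≤ Real.exp (-(1/(16*k))) := by
          apply Real.exp_le_exp.mpr; linarith
        have h7 : 1/(1 + 1/(16*k)) ≤ 1 - 1/(32*k) := by
          have hhalf : (1:ℝ)/(32*k) = (1/(16*k))/2 := by ring
          rw [hhalf, div_le_iff₀ (by positivity)]
          have hx1 : (0:ℝ) < 1/(16*k) := by positivity
          nlinarith
        linarith
      calc ∑ j ∈ Finset.range N, Real.exp (-(|(j:ℝ) - (j0:ℝ)| * w))
          ≤ 2 / (1 - Real.exp (-w)) := sum_exp_abs_le hw0 N j0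
        _ ≤ 2 / (1/(32*k)) := by
            apply div_le_div_of_nonneg_left (by norm_num) (by positivity) hden
        _ = 64 * k := by field_simp; ring
  have htri : dist (cayley (f s)) (cayley (f t))
      ≤ ∑ j ∈ Finset.range N, dist (cayley (f (u j))) (cayley (f (u (j+1)))) := by
    have := dist_le_range_sum_dist (fun j => cayley (f (u j))) N
    simpa [hu0, huN] using this
  calc dist (cayley (f s)) (cayley (f t))
      ≤ ∑ j ∈ Finset.range N, dist (cayley (f (u j))) (cayley (f (u (j+1)))) := htri
    _ ≤ ∑ j ∈ Finset.range N,
        (2 * Real.exp ((k+c)/2 + c/8) * Real.exp (-R/4)) * Real.exp (-(|(j:ℝ) - (j0:ℝ)| * w)) :=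
        Finset.sum_le_sum step
    _ = (2 * Real.exp ((k+c)/2 + c/8) * Real.exp (-R/4))
        * ∑ j ∈ Finset.range N, Real.exp (-(|(j:ℝ) - (j0:ℝ)| * w)) := by
        rw [Finset.mul_sum]
    _ ≤ (2 * Real.exp ((k+c)/2 + c/8) * Real.exp (-R/4)) * (64*k) := by
        gcongr
    _ = (128 * k * Real.exp ((k+c)/2 + c/8)) * Real.exp (-R/4) := by ring

noncomputable def psi0 (w : ℂ) : ℂ := Complex.I * (1 + w) / (1 - w)

lemma psi0_im {w : ℂ} (hw : ‖w‖ < 1) :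
    0 < (psi0 w).im := by
  have hns : Complex.normSq w < 1 := by
    have := Complex.sq_norm w
    nlinarith [norm_nonneg w]
  have hw1 : (1:ℂ) - w ≠ 0 := by
    intro h
    have : w = 1 := by linear_combination -h
    rw [this] at hw; simp at hw
  have hpos : 0 < Complex.normSq (1 - w) := Complex.normSq_pos.mpr hw1
  have him : (psi0 w).im = (1 - Complex.normSq w) / Complex.normSq (1 - w) := by
    rw [psi0, Complex.div_im]
    simp only [Complex.mul_im, Complex.mul_re, Complex.I_re, Complex.I_im, Complex.add_re,
      Complex.add_im, Complex.one_re, Complex.one_im, Complex.sub_re, Complex.sub_im,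
      Complex.normSq_apply]
    field_simp
    ring
  rw [him]
  exact div_pos (by linarith) hpos

noncomputable def psi (w : ℂ) : ℍ :=
  if h : 0 < (psi0 w).im then ⟨psi0 w, h⟩ else UpperHalfPlane.I

lemma psi_coe {w : ℂ} (hw : ‖w‖ < 1) : (psi w : ℂ) = psi0 w := by
  rw [psi, dif_pos (psi0_im hw)]

lemma cayley_psi {w : ℂ} (hw : ‖w‖ < 1) : cayley (psi w) = w := by
  have hw1 : (1:ℂ) - w ≠ 0 := by
    intro h
    have : w = 1 := by linear_combination -h
    rw [this] at hw; simp at hw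
  rw [cayley, psi_coe hw, psi0]
  have hden : Complex.I * (1 + w) / (1 - w) + Complex.I ≠ 0 := by
    have : Complex.I * (1 + w) / (1 - w) + Complex.I = 2 * Complex.I / (1 - w) := by
      field_simp; ring
    rw [this]
    exact div_ne_zero (by norm_num [Complex.I_ne_zero]) hw1
  field_simp
  ring

lemma psi_cayley (z : ℍ) : psi (cayley z) = z := by
  have hz := den_ne z
  apply UpperHalfPlane.ext
  rw [psi_coe (abs_cayley_lt_one z), psi0, cayley]
  have h1 : (1:ℂ) - ((z:ℂ) - Complex.I)/((z:ℂ) + Complex.I) = 2*Complex.I/((z:ℂ) + Complex.I) := by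
    field_simp; ring
  have h2 : (1:ℂ) + ((z:ℂ) - Complex.I)/((z:ℂ) + Complex.I) = 2*(z:ℂ)/((z:ℂ) + Complex.I) := by
    field_simp; ring
  rw [h1, h2]
  field_simp

lemma isPreconnected_pre (p : ℂ) (ρ : ℝ) :
    IsPreconnected (cayley ⁻¹' Metric.ball p ρ) := by
  set S := Metric.ball p ρ ∩ Metric.ball (0:ℂ) 1 with hS
  have himg : cayley ⁻¹' Metric.ball p ρ = psi '' S := by
    ext z
    constructor
    · intro hz
      refine ⟨cayley z, ⟨hz, ?_⟩, psi_cayley z⟩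
      rw [Metric.mem_ball, Complex.dist_eq, sub_zero]
      exact abs_cayley_lt_one z
    · rintro ⟨w, ⟨hw1, hw2⟩, rfl⟩
      have habs : ‖w‖ < 1 := by
        rw [Metric.mem_ball, Complex.dist_eq, sub_zero] at hw2; exact hw2
      show psi w ∈ cayley ⁻¹' Metric.ball p ρ
      rw [Set.mem_preimage, cayley_psi habs]
      exact hw1
  rw [himg]
  have hconv : Convex ℝ S := (convex_ball p ρ).inter (convex_ball 0 1)
  apply hconv.isPreconnected.image
  have hind := UpperHalfPlane.isEmbedding_coe.toIsInducing
  rw [hind.continuousOn_iff]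
  have : ContinuousOn psi0 S := by
    apply ContinuousOn.div
    · exact (continuous_const.mul (continuous_const.add continuous_id)).continuousOn
    · exact (continuous_const.sub continuous_id).continuousOn
    · intro w hw
      have habs : ‖w‖ < 1 := by
        have := hw.2; rwa [Metric.mem_ball, Complex.dist_eq, sub_zero] at this
      intro h
      have : w = 1 := by linear_combination -h
      rw [this] at habs; simp at habs
  apply this.congr
  intro w hw
  have habs : ‖w‖ < 1 := by
    have := hw.2; rwa [Metric.mem_ball, Complex.dist_eq, sub_zero] at this
  exact psi_coe habs

end NestedQG

/-- A sequence of pairwise disjoint, nested uniform quasigeodesic lines in the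
hyperbolic plane that eventually leaves every compact set converges to a single
point `p` of the ideal circle: for every neighborhood `U` of `p` in the
compactified disk, `ℓₙ ⊆ U` for all large `n`.  Nested means each `ℓₙ₊₁` lies
in a closed half-plane bounded by `ℓₙ` (the half-planes decreasing). -/
theorem nested_quasigeodesics_converge_to_ideal_point
    (k c : ℝ) (ℓ : ℕ → ℝ → UpperHalfPlane)
    (hqg : ∀ n, IsQuasigeodesicLine k c (ℓ n))
    (hdisj : ∀ m n, m ≠ n → Disjoint (Set.range (ℓ m)) (Set.range (ℓ n)))
    (hnested : ∃ H : ℕ → Set UpperHalfPlane, (∀ n, IsClosed (H n)) ∧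
      (∀ n, frontier (H n) = Set.range (ℓ n)) ∧
      (∀ n, Set.range (ℓ (n + 1)) ⊆ H n) ∧ (∀ n, H (n + 1) ⊆ H n))
    (hescape : ∀ K : Set UpperHalfPlane, IsCompact K →
      ∀ᶠ n in Filter.atTop, Set.range (ℓ n) ∩ K = ∅) :
    ∃ p ∈ Metric.sphere (0 : ℂ) 1, ∀ U ∈ nhds p,
      ∀ᶠ n in Filter.atTop, cayley '' Set.range (ℓ n) ⊆ U := by
  classical
  obtain ⟨H, hHcl, hHfr, hHsub, hHdec⟩ := hnested
  obtain ⟨hk, hc, -⟩ := hqg 0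
  have hk0 : (0:ℝ) < k := lt_of_lt_of_le one_pos hk
  set C₀ : ℝ := 128*k*Real.exp ((k+c)/2 + c/8) with hC₀
  have hC₀pos : 0 < C₀ := by rw [hC₀]; positivity
  -- monotonicity of the half-planes
  have hmono : ∀ a b : ℕ, a ≤ b → H b ⊆ H a := by
    intro a b hab
    induction hab with
    | refl => exact subset_rfl
    | step h ih => exact fun z hz => ih ((hHdec _) hz)
  have hrange : ∀ a b : ℕ, a < b → Set.range (ℓ b) ⊆ H a := by
    intro a b hab
    match b, hab with
    | (m+1), hab => exact (hHsub m).trans (hmono a m (Nat.lt_succ_iff.mp hab))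
  have hkey : ∀ n : ℕ, ∀ z ∈ Set.range (ℓ n), z ∉ H (n+1) := by
    intro n z hz hzH
    have h1 : z ∉ Set.range (ℓ (n+1)) := fun h =>
      Set.disjoint_left.mp (hdisj n (n+1) (by omega)) hz h
    have h2 : z ∈ interior (H (n+1)) := by
      have hcl : closure (H (n+1)) = H (n+1) := (hHcl (n+1)).closure_eq
      have hmem : z ∈ interior (H (n+1)) ∪ frontier (H (n+1)) := by
        rw [← closure_eq_interior_union_frontier, hcl]; exact hzH
      rcases hmem with h | h
      · exact h
      · rw [hHfr] at h; exact absurd h h1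
    have h3 : z ∈ interior (H n) := interior_mono (hHdec n) h2
    have h4 : z ∈ frontier (H n) := by rw [hHfr]; exact hz
    have h5 : frontier (H n) = closure (H n) \ interior (H n) := rfl
    rw [h5] at h4
    exact h4.2 h3
  -- the lines go uniformly far from the basepoint
  have hfar : ∀ R : ℝ, ∀ᶠ n in Filter.atTop, ∀ u : ℝ, R ≤ dist (ℓ n u) UpperHalfPlane.I := by
    intro R
    filter_upwards [hescape (Metric.closedBall UpperHalfPlane.I R)
      (isCompact_closedBall _ _)] with n hn u
    by_contra h
    push_neg at h
    have : ℓ n u ∈ Set.range (ℓ n) ∩ Metric.closedBall UpperHalfPlane.I R :=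
      ⟨Set.mem_range_self u, Metric.mem_closedBall.mpr h.le⟩
    rw [hn] at this
    exact this
  -- eventual small diameter in the disk
  have hdiam : ∀ ε : ℝ, 0 < ε → ∀ᶠ n in Filter.atTop, ∀ s t : ℝ,
      dist (cayley (ℓ n s)) (cayley (ℓ n t)) ≤ ε := by
    intro ε hε
    set R : ℝ := -4*Real.log (ε/C₀) with hRdef
    have hval : C₀ * Real.exp (-R/4) = ε := by
      rw [hRdef, show -(-4*Real.log (ε/C₀))/4 = Real.log (ε/C₀) by ring,
        Real.exp_log (by positivity)]
      field_simp
    filter_upwards [hfar R] with n hn s t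
    obtain ⟨hk', hc', hq⟩ := hqg n
    have := NestedQG.diam_bound hk' hc' (ℓ n) (fun s t => (hq s t).1)
      (fun s t => (hq s t).2) hn s t
    rw [← hC₀] at this
    linarith [this, hval.le]
  -- eventually close to the circle
  have hnear : ∀ ε : ℝ, 0 < ε → ∀ᶠ n in Filter.atTop, ∀ s : ℝ,
      1 - ε ≤ ‖cayley (ℓ n s)‖ := by
    intro ε hε
    set R : ℝ := -Real.log (ε/2) with hRdef
    have hval : 2 * Real.exp (-R) = ε := by
      rw [hRdef, neg_neg, Real.exp_log (by positivity)]
      ring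
    filter_upwards [hfar R] with n hn s
    have h1 := NestedQG.one_sub_abs_cayley (ℓ n s)
    have h2 : Real.exp (-dist (ℓ n s) UpperHalfPlane.I) ≤ Real.exp (-R) := by
      apply Real.exp_le_exp.mpr; linarith [hn s]
    linarith
  set x : ℕ → ℂ := fun n => cayley (ℓ n 0) with hx
  have hxball : ∀ n, x n ∈ Metric.closedBall (0:ℂ) 1 := by
    intro n
    rw [Metric.mem_closedBall, Complex.dist_eq, sub_zero]
    exact (NestedQG.abs_cayley_lt_one _).le
  -- any cluster point lies on the unit circle
  have hsphere : ∀ q : ℂ, MapClusterPt q Filter.atTop x → q ∈ Metric.sphere (0:ℂ) 1 := by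
    intro q hq
    rw [Metric.mem_sphere, Complex.dist_eq, sub_zero]
    have habs : ∀ ε : ℝ, 0 < ε → |‖q‖ - 1| ≤ 2*ε := by
      intro ε hε
      have hfreq := (mapClusterPt_iff_frequently.mp hq) (Metric.ball q ε) (Metric.ball_mem_nhds q hε)
      obtain ⟨n, hn1, hn2⟩ := (hfreq.and_eventually (hnear ε hε)).exists
      have h1 : 1 - ε ≤ ‖x n‖ := hn2 0
      have h2 : ‖x n‖ ≤ 1 := (NestedQG.abs_cayley_lt_one _).le
      have h3 : |‖x n‖ - ‖q‖| ≤ ‖x n - q‖ := by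
        exact abs_norm_sub_norm_le (x n) q
      have h4 : ‖x n - q‖ < ε := by
        rw [← Complex.dist_eq]; exact Metric.mem_ball.mp hn1
      have h5 := abs_le.mp (le_of_lt (lt_of_le_of_lt h3 h4))
      rw [abs_le]
      constructor <;> linarith [h5.1, h5.2]
    by_contra hne
    have hpos : 0 < |‖q‖ - 1| := by
      apply abs_pos.mpr
      intro h
      exact hne (by linarith [sub_eq_zero.mp h])
    have := habs (|‖q‖ - 1|/4) (by linarith)
    linarith
  -- cluster points are unique
  have huniq : ∀ p q : ℂ, MapClusterPt p Filter.atTop x → MapClusterPt q Filter.atTop x →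
      p = q := by
    intro p q hp hq
    by_contra hne
    set ε : ℝ := dist p q / 5 with hεdef
    have hε0 : 0 < ε := by
      rw [hεdef]
      have := dist_pos.mpr hne
      linarith
    obtain ⟨M₀, hM₀⟩ := Filter.eventually_atTop.mp (hdiam ε hε0)
    have hfp : ∀ N : ℕ, ∃ n ≥ N, dist (x n) p < ε := by
      intro N
      have := (mapClusterPt_iff_frequently.mp hp) (Metric.ball p ε) (Metric.ball_mem_nhds p hε0)
      obtain ⟨n, hn1, hn2⟩ := Filter.frequently_atTop.mp this N
      exact ⟨n, hn1, Metric.mem_ball.mp hn2⟩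
    have hfq : ∀ N : ℕ, ∃ n ≥ N, dist (x n) q < ε := by
      intro N
      have := (mapClusterPt_iff_frequently.mp hq) (Metric.ball q ε) (Metric.ball_mem_nhds q hε0)
      obtain ⟨n, hn1, hn2⟩ := Filter.frequently_atTop.mp this N
      exact ⟨n, hn1, Metric.mem_ball.mp hn2⟩
    obtain ⟨n, hnM, hn⟩ := hfp M₀
    obtain ⟨m, hm1, hm⟩ := hfq (max (n+1) M₀)
    obtain ⟨l, hl1, hl⟩ := hfp (m+1)
    have hmM₀ : M₀ ≤ m := le_trans (le_max_right _ _) hm1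
    have hnm : n + 1 ≤ m := le_trans (le_max_left _ _) hm1
    have hdpq : dist p q = 5*ε := by rw [hεdef]; ring
    set s : Set ℍ := cayley ⁻¹' Metric.ball p (3*ε) with hsdef
    have hpre := NestedQG.isPreconnected_pre p (3*ε)
    rw [← hsdef] at hpre
    -- the frontier of H m misses the ball around p
    have hfrd : ∀ z ∈ Set.range (ℓ m), cayley z ∉ Metric.ball p (3*ε) := by
      rintro z ⟨v, rfl⟩ hmem
      have h1 : dist (cayley (ℓ m v)) (x m) ≤ ε := hM₀ m hmM₀ v 0
      have h3 : dist (cayley (ℓ m v)) p < 3*ε := Metric.mem_ball.mp hmem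
      have h4 : dist p q ≤ dist p (cayley (ℓ m v)) + dist (cayley (ℓ m v)) (x m)
          + dist (x m) q := dist_triangle4 p _ _ q
      rw [dist_comm p (cayley (ℓ m v))] at h4
      linarith
    -- base point of ℓ l
    have hzl_s : ℓ l 0 ∈ s := by
      rw [hsdef, Set.mem_preimage, Metric.mem_ball]
      calc dist (cayley (ℓ l 0)) p = dist (x l) p := rfl
        _ < ε := hl
        _ ≤ 3*ε := by linarith
    have hzlH : ℓ l 0 ∈ H m := hrange m l (by omega) (Set.mem_range_self 0)
    have hzl_int : ℓ l 0 ∈ interior (H m) := by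
      have hnf : ℓ l 0 ∉ frontier (H m) := by
        rw [hHfr]
        intro hmem
        exact Set.disjoint_left.mp (hdisj m l (by omega)) hmem (Set.mem_range_self 0)
      have hmem : ℓ l 0 ∈ interior (H m) ∪ frontier (H m) := by
        rw [← closure_eq_interior_union_frontier, (hHcl m).closure_eq]; exact hzlH
      rcases hmem with h | h
      · exact h
      · exact absurd h hnf
    have hsub : s ⊆ interior (H m) ∪ (H m)ᶜ := by
      intro z hz
      by_cases hzH : z ∈ H m
      · left
        have hnf : z ∉ frontier (H m) := by
          rw [hHfr]
          intro hmem
          exact hfrd z hmem hz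
        have hmem : z ∈ interior (H m) ∪ frontier (H m) := by
          rw [← closure_eq_interior_union_frontier, (hHcl m).closure_eq]; exact hzH
        rcases hmem with h | h
        · exact h
        · exact absurd h hnf
      · right; exact hzH
    have hsv : ¬ (s ∩ (H m)ᶜ).Nonempty := by
      intro hne'
      have := hpre (interior (H m)) ((H m)ᶜ) isOpen_interior (hHcl m).isOpen_compl hsub
        ⟨ℓ l 0, hzl_s, hzl_int⟩ hne'
      obtain ⟨z1, -, hz1i, hz1c⟩ := this
      exact hz1c (interior_subset hz1i)
    have hzn_s : ℓ n 0 ∈ s := by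
      rw [hsdef, Set.mem_preimage, Metric.mem_ball]
      calc dist (cayley (ℓ n 0)) p = dist (x n) p := rfl
        _ < ε := hn
        _ ≤ 3*ε := by linarith
    have hznH : ℓ n 0 ∈ H m := by
      by_contra h
      exact hsv ⟨ℓ n 0, hzn_s, h⟩
    exact hkey n (ℓ n 0) (Set.mem_range_self 0) (hmono (n+1) m hnm hznH)
  -- existence of a cluster point
  have hneb : (Filter.map x Filter.atTop).NeBot := Filter.map_neBot
  have hle : Filter.map x Filter.atTop ≤ Filter.principal (Metric.closedBall (0:ℂ) 1) := by
    rw [Filter.le_principal_iff, Filter.mem_map]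
    exact Filter.Eventually.of_forall hxball
  obtain ⟨p, hpball, hpclus⟩ := (isCompact_closedBall (0:ℂ) 1).exists_clusterPt hle
  have hpmap : MapClusterPt p Filter.atTop x := hpclus
  -- convergence
  have htend : Filter.Tendsto x Filter.atTop (nhds p) := by
    by_contra hnot
    rw [Metric.tendsto_atTop] at hnot
    push_neg at hnot
    obtain ⟨ε, hε, hbad⟩ := hnot
    set C : Set ℂ := Metric.closedBall (0:ℂ) 1 ∩ {z | ε ≤ dist z p} with hCdef
    have hfreq : ∃ᶠ n in Filter.atTop, x n ∈ C := by
      rw [Filter.frequently_atTop]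
      intro a
      obtain ⟨n, hn1, hn2⟩ := hbad a
      exact ⟨n, hn1, hxball n, hn2⟩
    have hcomp : IsCompact C := (isCompact_closedBall _ _).inter_right
      (isClosed_le continuous_const (Continuous.dist continuous_id continuous_const))
    set F := Filter.atTop ⊓ Filter.principal {n | x n ∈ C} with hF
    have hFne : F.NeBot := Filter.frequently_iff_neBot.mp hfreq
    have hleC : Filter.map x F ≤ Filter.principal C := by
      rw [Filter.le_principal_iff, Filter.mem_map]
      exact Filter.mem_inf_of_right (Filter.mem_principal_self _)
    obtain ⟨q, hqC, hqcl⟩ := hcomp.exists_clusterPt hleC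
    have hqmap : MapClusterPt q Filter.atTop x :=
      hqcl.mono (Filter.map_mono inf_le_left)
    have : q = p := huniq q p hqmap hpmap
    rw [this] at hqC
    have : ε ≤ dist p p := hqC.2
    simp at this
    linarith
  refine ⟨p, hsphere p hpmap, ?_⟩
  intro U hU
  obtain ⟨ε, hε, hball⟩ := Metric.mem_nhds_iff.mp hU
  have h2 : ∀ᶠ n in Filter.atTop, dist (x n) p < ε/4 := by
    have : Metric.ball p (ε/4) ∈ nhds p := Metric.ball_mem_nhds p (by linarith)
    filter_upwards [htend this] with n hn
    exact Metric.mem_ball.mp hn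
  filter_upwards [hdiam (ε/4) (by linarith), h2] with n hn1 hn2
  rintro y ⟨z, ⟨sy, rfl⟩, rfl⟩
  apply hball
  rw [Metric.mem_ball]
  calc dist (cayley (ℓ n sy)) p ≤ dist (cayley (ℓ n sy)) (x n) + dist (x n) p :=
        dist_triangle _ _ _
    _ ≤ ε/4 + dist (x n) p := by
        have := hn1 sy 0
        linarith [this]
    _ < ε/4 + ε/4 := by linarith
    _ < ε := by linarith
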